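/- Let A ∈ ℝ^{m×n} and x̄ ∈ {0,1}ⁿ with support S. If there exists y ∈ ℝᵐ with aᵢᵀy > 1 for i ∈ S and aᵢᵀy < 1 for i ∉ S (where aᵢ are the columns of A), then for every x ∈ [0,1]ⁿ with Ax = Ax̄ and x ≠ x̄ one has ‖x‖₁ > ‖x̄‖₁. -/
import Mathlib


/-- Explicit uniqueness certificate for box-constrained ℓ¹-minimization at a binary point:
if `aᵢᵀy > 1` for `i ∈ S` and `aᵢᵀy < 1` for `i ∉ S` (`S = {i : x̄ i = 1}`), then every
feasible `x ∈ [0,1]ⁿ` with `Ax = Ax̄`, `x ≠ x̄` satisfies `‖x‖₁ > ‖x̄‖₁`. -/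
theorem stmt13 (m n : ℕ) (A : Matrix (Fin m) (Fin n) ℝ) (xb : Fin n → ℝ)
    (hbin : ∀ i, xb i = 0 ∨ xb i = 1) (y : Fin m → ℝ)
    (hyS : ∀ i, xb i = 1 → 1 < ∑ j, A j i * y j)
    (hySc : ∀ i, xb i ≠ 1 → ∑ j, A j i * y j < 1) :
    ∀ x : Fin n → ℝ, (∀ i, x i ∈ Set.Icc (0:ℝ) 1) → A.mulVec x = A.mulVec xb → x ≠ xb →
      ∑ i, |x i| > ∑ i, |xb i| := by
  intro x hx hAx hne
  set c : Fin n → ℝ := fun i => ∑ j, A j i * y j with hc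
  -- orthogonality: ∑ c i * (x i - xb i) = 0
  have hzero : ∑ i, c i * (x i - xb i) = 0 := by
    have : ∑ i, c i * (x i - xb i)
        = ∑ j, y j * ((A.mulVec x) j - (A.mulVec xb) j) := by
      simp only [hc, Matrix.mulVec, dotProduct, Finset.sum_mul, Finset.mul_sum,
        ← Finset.sum_sub_distrib]
      rw [Finset.sum_comm]
      congr 1; ext i; congr 1; ext j; ring
    rw [this, hAx]; simp
  -- each term of f is nonneg, and positive where x differs
  have key : ∀ i, 0 ≤ (1 - c i) * (x i - xb i) ∧
      (x i ≠ xb i → 0 < (1 - c i) * (x i - xb i)) := by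
    intro i
    obtain ⟨h0, h1⟩ := hx i
    rcases hbin i with h | h
    · have hci : c i < 1 := hySc i (by rw [h]; norm_num)
      constructor
      · apply mul_nonneg (by linarith) (by rw [h]; linarith)
      · intro hne'
        have : 0 < x i - xb i := by
          rw [h] at hne' ⊢
          rcases lt_or_eq_of_le h0 with h' | h'
          · linarith
          · exact absurd h'.symm hne'
        exact mul_pos (by linarith) this
    · have hci : 1 < c i := hyS i h
      constructor
      · nlinarith
      · intro hne'
        have hlt : x i - xb i < 0 := by
          rw [h] at hne' ⊢
          rcases lt_or_eq_of_le h1 with h' | h'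
          · linarith
          · exact absurd h' hne'
        exact mul_pos_of_neg_of_neg (by linarith) hlt
  obtain ⟨i0, hi0⟩ : ∃ i, x i ≠ xb i := Function.ne_iff.mp hne
  have hpos : 0 < ∑ i, (1 - c i) * (x i - xb i) :=
    Finset.sum_pos' (fun i _ => (key i).1) ⟨i0, Finset.mem_univ _, (key i0).2 hi0⟩
  have hsum : ∑ i, (1 - c i) * (x i - xb i) = ∑ i, (x i - xb i) := by
    have : ∑ i, (1 - c i) * (x i - xb i)
        = ∑ i, ((x i - xb i) - c i * (x i - xb i)) := by
      congr 1; ext i; ring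
    rw [this, Finset.sum_sub_distrib, hzero]; ring
  have habs : ∀ i, |x i| = x i := fun i => abs_of_nonneg (hx i).1
  have habsb : ∀ i, |xb i| = xb i := fun i => by
    rcases hbin i with h | h <;> rw [h] <;> norm_num
  simp only [habs, habsb, gt_iff_lt]
  have := hsum ▸ hpos
  rw [Finset.sum_sub_distrib] at this
  linarith
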